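/- Assume Γ is unitrivalent and j ∈ QCG_k(Γ; j'). Then the map sending λ to exp(π√−1 · Σ_{f ∈ Ex(λ)} j f) is a group homomorphism from the stabilizer subgroup Stab(j) = {λ ∈ Z(Γ) | λ·j = j} to ℂˣ. -/

import Mathlib

open scoped BigOperators

set_option linter.unusedSectionVars false
set_option linter.unreachableTactic false
set_option linter.unusedTactic false

variable {V E : Type*} [Fintype V] [Fintype E] [DecidableEq V] [DecidableEq E]

/-- The multiset of edge-ends at a vertex `v`: each edge `e` contributes one end for
`s e = v` and one end for `t e = v`, so a loop at `v` contributes twice. -/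
def endsAt (s t : E → V) (v : V) : Multiset E :=
  (Finset.univ.filter fun e => s e = v).val + (Finset.univ.filter fun e => t e = v).val

/-- The degree of a vertex (a loop counts twice). -/
def degree (s t : E → V) (v : V) : ℕ := Multiset.card (endsAt s t v)

/-- A graph is unitrivalent if every vertex has degree `1` or `3`. -/
def Unitrivalent (s t : E → V) : Prop := ∀ v, degree s t v = 1 ∨ degree s t v = 3

/-- The cycle space `Z(Γ)`: the `ZMod 2`-valued functions on edges whose total value over
the edge-ends at every vertex is `0`.  It plays the role of `H₁(Γ; ℤ/2)`. -/
def cycleSpace (s t : E → V) : AddSubgroup (E → ZMod 2) where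
  carrier := {x | ∀ v, ((endsAt s t v).map x).sum = 0}
  zero_mem' := by intro v; simp
  add_mem' := by
    intro a b ha hb v
    have h : ((endsAt s t v).map (a + b)).sum
        = ((endsAt s t v).map a).sum + ((endsAt s t v).map b).sum := by
      rw [show ((a + b : E → ZMod 2)) = fun e => a e + b e from rfl]
      rw [Multiset.sum_map_add]
    rw [h, ha v, hb v, add_zero]
  neg_mem' := by
    intro a ha v
    have h : (-a : E → ZMod 2) = a := funext fun e => by
      have h2 : ∀ x : ZMod 2, -x = x := by decide
      exact h2 (a e)
    rw [h]; exact ha v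

/-- A weight of level `k`: each edge gets a value in `{0, 1/2, 1, …, k/2}`. -/
def IsWeight (k : ℕ) (j : E → ℚ) : Prop := ∀ f, ∃ m : ℕ, m ≤ k ∧ j f = (m : ℚ) / 2

/-- The set `QCG_k(Γ; j')` of admissible weights of level `k` with boundary values `j'`:
weights agreeing with `j'` on edges with a univalent endpoint and satisfying the quantum
Clebsch–Gordan condition at every trivalent vertex (a loop contributes its weight twice;
the condition `2x ≤ a+b+c` for each of the three end-weights `x` is the triangle
inequality). -/
def QCG (s t : E → V) (k : ℕ) (j' : E → ℚ) : Set (E → ℚ) :=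
  {j | IsWeight k j ∧
    (∀ f, (degree s t (s f) = 1 ∨ degree s t (t f) = 1) → j f = j' f) ∧
    (∀ v, degree s t v = 3 →
      (∃ m : ℤ, ((endsAt s t v).map j).sum = (m : ℚ)) ∧
      (∀ x ∈ (endsAt s t v).map j, 2 * x ≤ ((endsAt s t v).map j).sum) ∧
      ((endsAt s t v).map j).sum ≤ (k : ℚ))}

/-- The action of a cycle `lam` on a weight `j`:
`(lam · j) f = k/2 - j f` if `lam f = 1` and `(lam · j) f = j f` otherwise. -/
def actW (k : ℕ) (lam : E → ZMod 2) (j : E → ℚ) : E → ℚ :=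
  fun f => if lam f = 1 then (k : ℚ) / 2 - j f else j f

theorem actW_zero (k : ℕ) (j : E → ℚ) : actW k (0 : E → ZMod 2) j = j := by
  funext f
  simp [actW]

theorem actW_add (k : ℕ) (l l' : E → ZMod 2) (j : E → ℚ) :
    actW k (l + l') j = actW k l (actW k l' j) := by
  funext f
  have h : ∀ x : ZMod 2, x = 0 ∨ x = 1 := by decide
  simp only [actW, Pi.add_apply]
  rcases h (l f) with h1 | h1 <;> rcases h (l' f) with h2 | h2 <;>
    simp [h1, h2] <;> ring

theorem add_self_zmod2 (l : E → ZMod 2) : l + l = 0 := by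
  funext f
  have h : ∀ x : ZMod 2, x + x = 0 := by decide
  exact h (l f)

/-- A vertex `v` lies on the cycle `lam` if some edge of `lam` has `v` as an endpoint. -/
def LiesOn (s t : E → V) (lam : E → ZMod 2) (v : V) : Prop :=
  ∃ e, lam e = 1 ∧ (s e = v ∨ t e = v)

/-- An edge `f` is `lam`-external if `lam` does not pass through `f` and exactly one of
its endpoints lies on `lam`. -/
def IsExternal (s t : E → V) (lam : E → ZMod 2) (f : E) : Prop :=
  lam f = 0 ∧ Xor' (LiesOn s t lam (s f)) (LiesOn s t lam (t f))

/-- `Ex(lam)`: the finite set of `lam`-external edges. -/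
noncomputable def Ex (s t : E → V) (lam : E → ZMod 2) : Finset E :=
  letI := Classical.decPred (IsExternal s t lam)
  Finset.univ.filter (IsExternal s t lam)

/-- A twisted 1-cocycle `δ : Z(Γ) → (QCG_k(Γ; j') → ℂˣ)` (encoded as a function on all of
`(E → ZMod 2) × (E → ℚ)`, constrained only on `Z(Γ) × QCG_k(Γ; j')`). -/
def IsCocycle (s t : E → V) (k : ℕ) (j' : E → ℚ)
    (δ : (E → ZMod 2) → (E → ℚ) → ℂˣ) : Prop :=
  ∀ lam ∈ cycleSpace s t, ∀ lam' ∈ cycleSpace s t, ∀ j ∈ QCG s t k j',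
    δ (lam + lam') j = δ lam (actW k lam' j) * δ lam' j

/-- A coboundary. -/
def IsCoboundary (s t : E → V) (k : ℕ) (j' : E → ℚ)
    (δ : (E → ZMod 2) → (E → ℚ) → ℂˣ) : Prop :=
  ∃ c : (E → ℚ) → ℂˣ, ∀ lam ∈ cycleSpace s t, ∀ j ∈ QCG s t k j',
    δ lam j = c (actW k lam j) * (c j)⁻¹

/-- The external edge condition. -/
def ExtCond (s t : E → V) (k : ℕ) (j' : E → ℚ)
    (δ : (E → ZMod 2) → (E → ℚ) → ℂˣ) : Prop :=
  ∀ lam ∈ cycleSpace s t, ∀ j ∈ QCG s t k j', actW k lam j = j →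
    (δ lam j : ℂ) =
      Complex.exp (Real.pi * Complex.I * ((∑ f ∈ Ex s t lam, j f : ℚ) : ℂ))

/-- The stabilizer `Stab(j) = {lam ∈ Z(Γ) | lam · j = j}`, as a subgroup of the group of
`ZMod 2`-valued functions on edges. -/
def stab (s t : E → V) (k : ℕ) (j : E → ℚ) : AddSubgroup (E → ZMod 2) where
  carrier := {lam | lam ∈ cycleSpace s t ∧ actW k lam j = j}
  zero_mem' := ⟨(cycleSpace s t).zero_mem, actW_zero k j⟩
  add_mem' := by
    rintro a b ⟨ha1, ha2⟩ ⟨hb1, hb2⟩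
    exact ⟨add_mem ha1 hb1, by rw [actW_add, hb2, ha2]⟩
  neg_mem' := by
    rintro a ⟨ha1, ha2⟩
    have h : (-a : E → ZMod 2) = a := funext fun e => by
      have h2 : ∀ x : ZMod 2, -x = x := by decide
      exact h2 (a e)
    rw [h]
    exact ⟨ha1, ha2⟩

namespace Stmt10Aux

variable {V E : Type*} [Fintype V] [Fintype E] [DecidableEq V] [DecidableEq E]

lemma zmod2_cases (x : ZMod 2) : x = 0 ∨ x = 1 := by
  have h : ∀ y : ZMod 2, y = 0 ∨ y = 1 := by decide
  exact h x

lemma zmod2_not_one {x : ZMod 2} : ¬ x = 1 ↔ x = 0 := by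
  rcases zmod2_cases x with h | h <;> simp [h]

lemma msum_le {m : Multiset E} {f g : E → ℤ} (h : ∀ x ∈ m, f x ≤ g x) :
    (m.map f).sum ≤ (m.map g).sum := by
  induction m using Multiset.induction_on with
  | empty => simp
  | cons a mm ih =>
      simp only [Multiset.map_cons, Multiset.sum_cons]
      have h1 := h a (Multiset.mem_cons_self a mm)
      have h2 := ih (fun x hx => h x (Multiset.mem_cons_of_mem hx))
      omega

lemma msum_nonneg {m : Multiset E} {f : E → ℤ} (h : ∀ x ∈ m, 0 ≤ f x) :
    0 ≤ (m.map f).sum := by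
  induction m using Multiset.induction_on with
  | empty => simp
  | cons a mm ih =>
      simp only [Multiset.map_cons, Multiset.sum_cons]
      have h1 := h a (Multiset.mem_cons_self a mm)
      have h2 := ih (fun x hx => h x (Multiset.mem_cons_of_mem hx))
      omega

lemma mcard_filter (m : Multiset E) (p : E → Prop) [DecidablePred p] :
    ((m.filter p).card : ℤ) = (m.map fun f => if p f then (1 : ℤ) else 0).sum := by
  induction m using Multiset.induction_on with
  | empty => simp
  | cons a mm ih =>
      by_cases h : p a <;>
        simp [Multiset.filter_cons, h, ih] <;> push_cast <;> ring

lemma mem_endsAt {s t : E → V} {v : V} {f : E} :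
    f ∈ endsAt s t v ↔ (s f = v ∨ t f = v) := by
  simp [endsAt, Multiset.mem_add]

/-- sum of an ends-multiset map as two Finset sums -/
lemma endsum {R : Type*} [AddCommMonoid R] (s t : E → V) (v : V) (g : E → R) :
    ((endsAt s t v).map g).sum
      = (∑ f ∈ Finset.univ.filter fun f => s f = v, g f)
        + (∑ f ∈ Finset.univ.filter fun f => t f = v, g f) := by
  rw [endsAt, Multiset.map_add, Multiset.sum_add]
  rfl

lemma endsum_filter {R : Type*} [AddCommMonoid R] (s t : E → V) (v : V)
    (p : E → Prop) [DecidablePred p] (g : E → R) :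
    (((endsAt s t v).filter p).map g).sum
      = (∑ f ∈ Finset.univ.filter fun f => s f = v, if p f then g f else 0)
        + (∑ f ∈ Finset.univ.filter fun f => t f = v, if p f then g f else 0) := by
  rw [endsAt, Multiset.filter_add, Multiset.map_add, Multiset.sum_add]
  rw [← Finset.filter_val, ← Finset.filter_val]
  show (Finset.filter p _).sum g + (Finset.filter p _).sum g = _
  simp [Finset.sum_filter]

/-- number of `l`-ends at `v`, as an integer -/
def cntZ (s t : E → V) (l : E → ZMod 2) (v : V) : ℤ :=
  ((endsAt s t v).map fun f => if l f = 1 then (1 : ℤ) else 0).sum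

/-- number of common ends of `l, l'` at `v` -/
def cnt2Z (s t : E → V) (l l' : E → ZMod 2) (v : V) : ℤ :=
  ((endsAt s t v).map fun f => if l f = 1 ∧ l' f = 1 then (1 : ℤ) else 0).sum

/-- total weight at a vertex -/
def sigmaW (s t : E → V) (j : E → ℚ) (v : V) : ℚ := ((endsAt s t v).map j).sum

lemma cntZ_nonneg (s t : E → V) (l : E → ZMod 2) (v : V) : 0 ≤ cntZ s t l v := by
  apply msum_nonneg; intro x _; split <;> norm_num

lemma cnt2Z_nonneg (s t : E → V) (l l' : E → ZMod 2) (v : V) : 0 ≤ cnt2Z s t l l' v := by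
  apply msum_nonneg; intro x _; split <;> norm_num

lemma cntZ_le_degree (s t : E → V) (l : E → ZMod 2) (v : V) :
    cntZ s t l v ≤ (degree s t v : ℤ) := by
  have h := msum_le (m := endsAt s t v)
    (f := fun f => if l f = 1 then (1 : ℤ) else 0) (g := fun _ => (1 : ℤ))
    (fun x _ => by by_cases h : l x = 1 <;> simp [h])
  simpa [cntZ, degree, Multiset.map_const', Multiset.sum_replicate] using h

lemma cnt2Z_le_left (s t : E → V) (l l' : E → ZMod 2) (v : V) :
    cnt2Z s t l l' v ≤ cntZ s t l v := by
  apply msum_le; intro x _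
  by_cases h : l x = 1 <;> by_cases h' : l' x = 1 <;> simp [h, h']

lemma cnt2Z_le_right (s t : E → V) (l l' : E → ZMod 2) (v : V) :
    cnt2Z s t l l' v ≤ cntZ s t l' v := by
  apply msum_le; intro x _
  by_cases h : l x = 1 <;> by_cases h' : l' x = 1 <;> simp [h, h']

lemma cntZ_even {s t : E → V} {l : E → ZMod 2} (hl : l ∈ cycleSpace s t) (v : V) :
    2 ∣ cntZ s t l v := by
  have h0 := hl v
  have hcast : ((cntZ s t l v : ℤ) : ZMod 2) = 0 := by
    rw [cntZ]
    rw [show ((((endsAt s t v).map fun f => if l f = 1 then (1 : ℤ) else 0).sum : ℤ) : ZMod 2)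
        = (Int.castRingHom (ZMod 2)) ((endsAt s t v).map fun f => if l f = 1 then (1 : ℤ) else 0).sum from rfl]
    rw [map_multiset_sum (Int.castRingHom (ZMod 2))]
    rw [Multiset.map_map]
    have heq : ((endsAt s t v).map
        (⇑(Int.castRingHom (ZMod 2)) ∘ fun f => if l f = 1 then (1 : ℤ) else 0))
          = (endsAt s t v).map l := by
      apply Multiset.map_congr rfl
      intro f _
      rcases zmod2_cases (l f) with h | h <;> simp [h, Function.comp]
    rw [heq, h0]
  exact (ZMod.intCast_zmod_eq_zero_iff_dvd _ 2).1 hcast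

lemma cntZ_pos_of_end {s t : E → V} {l : E → ZMod 2} {v : V} {e : E}
    (he : l e = 1) (hev : s e = v ∨ t e = v) : 0 < cntZ s t l v := by
  have hmem : e ∈ endsAt s t v := mem_endsAt.2 hev
  have hmem2 : (if l e = 1 then (1:ℤ) else 0) ∈ (endsAt s t v).map fun f => if l f = 1 then (1:ℤ) else 0 :=
    Multiset.mem_map_of_mem _ hmem
  obtain ⟨m', hm'⟩ := Multiset.exists_cons_of_mem hmem2
  have hnn : 0 ≤ m'.sum := by
    apply Multiset.sum_nonneg
    intro x hx
    have hx2 : x ∈ ((endsAt s t v).map fun f => if l f = 1 then (1:ℤ) else 0) := by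
      rw [hm']; exact Multiset.mem_cons_of_mem hx
    obtain ⟨f, _, rfl⟩ := Multiset.mem_map.1 hx2
    split <;> norm_num
  rw [cntZ, hm', Multiset.sum_cons, if_pos he]
  omega

lemma exists_end_of_cntZ_pos {s t : E → V} {l : E → ZMod 2} {v : V}
    (h : 0 < cntZ s t l v) : ∃ e, l e = 1 ∧ (s e = v ∨ t e = v) := by
  by_contra hc
  push_neg at hc
  have : cntZ s t l v = 0 := by
    rw [cntZ]
    apply Multiset.sum_eq_zero
    intro x hx
    obtain ⟨f, hf, rfl⟩ := Multiset.mem_map.1 hx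
    have hfv := mem_endsAt.1 hf
    by_cases h1 : l f = 1
    · rcases hfv with h2 | h2
      · exact absurd h2 (by simpa using (hc f h1).1)
      · exact absurd h2 (by simpa using (hc f h1).2)
    · simp [h1]
  omega

lemma liesOn_iff_cntZ_pos {s t : E → V} {l : E → ZMod 2} {v : V} :
    LiesOn s t l v ↔ 0 < cntZ s t l v := by
  constructor
  · rintro ⟨e, he, hev⟩; exact cntZ_pos_of_end he hev
  · intro h; obtain ⟨e, he, hev⟩ := exists_end_of_cntZ_pos h; exact ⟨e, he, hev⟩

end Stmt10Aux
namespace Stmt10Aux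

variable {V E : Type*} [Fintype V] [Fintype E] [DecidableEq V] [DecidableEq E]

lemma j_fix {k : ℕ} {l : E → ZMod 2} {j : E → ℚ} (hfix : actW k l j = j)
    {f : E} (hf : l f = 1) : 2 * j f = (k : ℚ) / 2 := by
  have h := congrFun hfix f
  rw [actW] at h
  simp only [if_pos hf] at h
  linarith

lemma khalf {k : ℕ} {l : E → ZMod 2} {j : E → ℚ} (hw : IsWeight k j)
    (hfix : actW k l j = j) {f : E} (hf : l f = 1) :
    ∃ m : ℤ, (k : ℚ) / 2 = (m : ℚ) := by
  obtain ⟨m, _, hjf⟩ := hw f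
  have h := j_fix hfix hf
  exact ⟨m, by rw [hjf] at h; push_cast; linarith⟩

lemma stab_cnt {s t : E → V} {l : E → ZMod 2}
    (hut : Unitrivalent s t) (hl : l ∈ cycleSpace s t) {v : V}
    (hpos : 0 < cntZ s t l v) : degree s t v = 3 ∧ cntZ s t l v = 2 := by
  have he := cntZ_even hl v
  have hle := cntZ_le_degree s t l v
  rcases hut v with h1 | h3
  · rw [h1] at hle; norm_num at hle; omega
  · rw [h3] at hle
    refine ⟨h3, by omega⟩

/-- the sum of weights over the `l`-ends at a vertex on `l` is `k/2`, and there
is exactly one non-`l` end -/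
lemma lam_ends {s t : E → V} {k : ℕ} {l : E → ZMod 2} {j : E → ℚ}
    (hut : Unitrivalent s t) (hl : l ∈ cycleSpace s t) (hfix : actW k l j = j)
    {v : V} (hpos : 0 < cntZ s t l v) :
    (((endsAt s t v).filter fun f => l f = 1).map j).sum = (k : ℚ) / 2 ∧
      ((endsAt s t v).filter fun f => ¬ l f = 1).card = 1 := by
  obtain ⟨hdeg, hcnt⟩ := stab_cnt hut hl hpos
  have hcard : (((endsAt s t v).filter fun f => l f = 1).card : ℤ) = 2 := by
    rw [mcard_filter]; exact hcnt
  have hcardN : ((endsAt s t v).filter fun f => l f = 1).card = 2 := by exact_mod_cast hcard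
  constructor
  · have hmc : ((endsAt s t v).filter fun f => l f = 1).map j
        = ((endsAt s t v).filter fun f => l f = 1).map (fun _ => (k : ℚ) / 4) := by
      apply Multiset.map_congr rfl
      intro f hf
      have hf1 : l f = 1 := (Multiset.mem_filter.1 hf).2
      have := j_fix hfix hf1
      linarith
    rw [hmc, Multiset.map_const', Multiset.sum_replicate, hcardN]
    push_cast
    ring
  · have hsplit : ((endsAt s t v).filter fun f => l f = 1).card
        + ((endsAt s t v).filter fun f => ¬ l f = 1).card = 3 := by
      rw [← Multiset.card_add, Multiset.filter_add_not]
      exact hdeg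
    omega

/-- decomposition of the weight at a vertex on `l` -/
lemma nonlam_sum {s t : E → V} {k : ℕ} {l : E → ZMod 2} {j : E → ℚ}
    (hut : Unitrivalent s t) (hl : l ∈ cycleSpace s t) (hfix : actW k l j = j)
    {v : V} (hpos : 0 < cntZ s t l v) :
    ∃ g : E, ((endsAt s t v).filter fun f => ¬ l f = 1) = {g} ∧
      sigmaW s t j v = (k : ℚ) / 2 + j g := by
  obtain ⟨hsum, hcard⟩ := lam_ends hut hl hfix hpos
  obtain ⟨g, hg⟩ := Multiset.card_eq_one.1 hcard
  refine ⟨g, hg, ?_⟩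
  have hM : (endsAt s t v).filter (fun f => l f = 1)
      + (endsAt s t v).filter (fun f => ¬ l f = 1) = endsAt s t v :=
    Multiset.filter_add_not _ _
  have hsum2 : sigmaW s t j v = (((endsAt s t v).filter fun f => l f = 1).map j).sum
      + (((endsAt s t v).filter fun f => ¬ l f = 1).map j).sum := by
    rw [sigmaW]
    conv_lhs => rw [← hM]
    rw [Multiset.map_add, Multiset.sum_add]
  rw [hsum2, hsum, hg]
  simp

/-- the non-`l` multiset sum at a vertex on `l` -/
lemma nonlam_msum {s t : E → V} {k : ℕ} {l : E → ZMod 2} {j : E → ℚ}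
    (hut : Unitrivalent s t) (hl : l ∈ cycleSpace s t) (hfix : actW k l j = j)
    {v : V} (hpos : 0 < cntZ s t l v) :
    (((endsAt s t v).filter fun f => ¬ l f = 1).map j).sum = sigmaW s t j v - (k : ℚ) / 2 := by
  obtain ⟨g, hg, hsig⟩ := nonlam_sum hut hl hfix hpos
  rw [hg, hsig]
  simp

/-- the weight of an edge with `l f = 0` having an endpoint on `l` is an integer -/
lemma edge_int {s t : E → V} {k : ℕ} {l : E → ZMod 2} {j : E → ℚ}
    (hut : Unitrivalent s t) (hl : l ∈ cycleSpace s t) (hfix : actW k l j = j)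
    (hw : IsWeight k j)
    (hq : ∀ v, degree s t v = 3 → ∃ n : ℤ, sigmaW s t j v = (n : ℚ))
    {f : E} {v : V} (hf0 : ¬ l f = 1) (hfv : s f = v ∨ t f = v)
    (hpos : 0 < cntZ s t l v) : ∃ n : ℤ, j f = (n : ℚ) := by
  obtain ⟨g, hg, hsig⟩ := nonlam_sum hut hl hfix hpos
  have hfg : f = g := by
    have hmem : f ∈ (endsAt s t v).filter fun f => ¬ l f = 1 :=
      Multiset.mem_filter.2 ⟨mem_endsAt.2 hfv, hf0⟩
    rw [hg] at hmem
    simpa using hmem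
  obtain ⟨hdeg, _⟩ := stab_cnt hut hl hpos
  obtain ⟨n0, hn0⟩ := hq v hdeg
  obtain ⟨e, he1, _⟩ := exists_end_of_cntZ_pos hpos
  obtain ⟨m, hm⟩ := khalf hw hfix he1
  refine ⟨n0 - m, ?_⟩
  rw [hfg]
  push_cast
  rw [hn0, hm] at hsig
  linarith

end Stmt10Aux
namespace Stmt10Aux

variable {V E : Type*} [Fintype V] [Fintype E] [DecidableEq V] [DecidableEq E]

noncomputable def Sfun (s t : E → V) (j : E → ℚ) (l : E → ZMod 2) : ℚ :=
  ∑ f ∈ Ex s t l, j f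

noncomputable def Gfun (s t : E → V) (k : ℕ) (j : E → ℚ) (l : E → ZMod 2) : ℚ :=
  ∑ v : V, if 0 < cntZ s t l v then sigmaW s t j v - (k : ℚ) / 2 else 0

def E2 (x : ℚ) : Prop := ∃ n : ℤ, x = 2 * (n : ℚ)

lemma E2_zero : E2 0 := ⟨0, by norm_num⟩

lemma E2_add {x y : ℚ} (hx : E2 x) (hy : E2 y) : E2 (x + y) := by
  obtain ⟨n, hn⟩ := hx; obtain ⟨m, hm⟩ := hy
  exact ⟨n + m, by rw [hn, hm]; push_cast; ring⟩

lemma E2_neg {x : ℚ} (hx : E2 x) : E2 (-x) := by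
  obtain ⟨n, hn⟩ := hx; exact ⟨-n, by rw [hn]; push_cast; ring⟩

lemma E2_sub {x y : ℚ} (hx : E2 x) (hy : E2 y) : E2 (x - y) := by
  rw [sub_eq_add_neg]; exact E2_add hx (E2_neg hy)

lemma E2_sum {ι : Type*} {s : Finset ι} {f : ι → ℚ} (h : ∀ i ∈ s, E2 (f i)) :
    E2 (∑ i ∈ s, f i) :=
  Finset.sum_induction f E2 (fun _ _ => E2_add) E2_zero h

lemma cntZ_add (s t : E → V) (l l' : E → ZMod 2) (v : V) :
    cntZ s t (l + l') v = cntZ s t l v + cntZ s t l' v - 2 * cnt2Z s t l l' v := by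
  have hpt : ∀ f : E, (if (l + l') f = 1 then (1 : ℤ) else 0)
      = (if l f = 1 then (1 : ℤ) else 0)
        + ((if l' f = 1 then (1 : ℤ) else 0)
          + (-2) * (if l f = 1 ∧ l' f = 1 then (1 : ℤ) else 0)) := by
    intro f
    have hval : (l + l') f = l f + l' f := rfl
    rw [hval]
    rcases zmod2_cases (l f) with h | h <;> rcases zmod2_cases (l' f) with h' | h' <;>
      rw [h, h'] <;> decide
  have hmeq : ((endsAt s t v).map fun f => if (l + l') f = 1 then (1 : ℤ) else 0)
      = ((endsAt s t v).map fun f => (if l f = 1 then (1 : ℤ) else 0)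
        + ((if l' f = 1 then (1 : ℤ) else 0)
          + (-2) * (if l f = 1 ∧ l' f = 1 then (1 : ℤ) else 0))) :=
    Multiset.map_congr rfl fun f _ => hpt f
  rw [cntZ, hmeq, Multiset.sum_map_add, Multiset.sum_map_add, Multiset.sum_map_mul_left]
  rw [cntZ, cntZ, cnt2Z]
  ring

lemma handshake (s t : E → V) (l l' : E → ZMod 2) :
    2 ∣ ∑ v : V, cnt2Z s t l l' v := by
  have key : ∑ v : V, cnt2Z s t l l' v
      = 2 * ∑ f : E, if l f = 1 ∧ l' f = 1 then (1 : ℤ) else 0 := by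
    have h1 : ∑ v : V, cnt2Z s t l l' v
        = (∑ v : V, ∑ f ∈ Finset.univ.filter fun f => s f = v,
            if l f = 1 ∧ l' f = 1 then (1 : ℤ) else 0)
          + (∑ v : V, ∑ f ∈ Finset.univ.filter fun f => t f = v,
            if l f = 1 ∧ l' f = 1 then (1 : ℤ) else 0) := by
      rw [← Finset.sum_add_distrib]
      exact Finset.sum_congr rfl fun v _ => endsum s t v _
    rw [h1, Finset.sum_fiberwise Finset.univ s _, Finset.sum_fiberwise Finset.univ t _]
    ring
  rw [key]
  exact Dvd.intro _ rfl

end Stmt10Aux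
namespace Stmt10Aux

variable {V E : Type*} [Fintype V] [Fintype E] [DecidableEq V] [DecidableEq E]

lemma SG {s t : E → V} {k : ℕ} {l : E → ZMod 2} {j : E → ℚ}
    (hut : Unitrivalent s t) (hl : l ∈ cycleSpace s t) (hfix : actW k l j = j)
    (hw : IsWeight k j)
    (hq : ∀ v, degree s t v = 3 → ∃ n : ℤ, sigmaW s t j v = (n : ℚ)) :
    E2 (Sfun s t j l - Gfun s t k j l) := by
  letI : DecidablePred (IsExternal s t l) := Classical.decPred _
  letI : DecidablePred (LiesOn s t l) := Classical.decPred _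
  have hS : Sfun s t j l = ∑ f : E, if IsExternal s t l f then j f else 0 := by
    unfold Sfun Ex
    rw [Finset.sum_filter]
  have hGform : Gfun s t k j l
      = ∑ v : V, if LiesOn s t l v then sigmaW s t j v - (k : ℚ) / 2 else 0 :=
    Finset.sum_congr rfl fun v _ =>
      if_congr liesOn_iff_cntZ_pos.symm rfl rfl
  set F : ℚ := ∑ f : E, ((if ¬ l f = 1 ∧ LiesOn s t l (s f) then j f else 0)
      + (if ¬ l f = 1 ∧ LiesOn s t l (t f) then j f else 0)) with hF
  have h1 : E2 (Sfun s t j l - F) := by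
    rw [hS, hF, ← Finset.sum_sub_distrib]
    apply E2_sum
    intro f _
    by_cases hl1 : l f = 1
    · have hne : ¬ IsExternal s t l f := by
        rintro ⟨h0, -⟩
        rw [h0] at hl1
        exact absurd hl1 (by decide)
      rw [if_neg hne, if_neg (by tauto), if_neg (by tauto)]
      simpa using E2_zero
    · by_cases hon1 : LiesOn s t l (s f) <;> by_cases hon2 : LiesOn s t l (t f)
      · have hne : ¬ IsExternal s t l f := by
          rintro ⟨-, hx⟩
          rcases hx with ⟨-, hb⟩ | ⟨-, hb⟩
          exacts [hb hon2, hb hon1]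
        obtain ⟨n, hn⟩ := edge_int hut hl hfix hw hq hl1 (Or.inl rfl)
          (liesOn_iff_cntZ_pos.1 hon1)
        refine ⟨-n, ?_⟩
        rw [if_neg hne, if_pos ⟨hl1, hon1⟩, if_pos ⟨hl1, hon2⟩, hn]
        push_cast
        ring
      · have hex : IsExternal s t l f := ⟨zmod2_not_one.1 hl1, Or.inl ⟨hon1, hon2⟩⟩
        rw [if_pos hex, if_pos ⟨hl1, hon1⟩, if_neg (by tauto)]
        simpa using E2_zero
      · have hex : IsExternal s t l f := ⟨zmod2_not_one.1 hl1, Or.inr ⟨hon2, hon1⟩⟩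
        rw [if_pos hex, if_neg (by tauto), if_pos ⟨hl1, hon2⟩]
        simpa using E2_zero
      · have hne : ¬ IsExternal s t l f := by
          rintro ⟨-, hx⟩
          rcases hx with ⟨hb, -⟩ | ⟨hb, -⟩
          exacts [hon1 hb, hon2 hb]
        rw [if_neg hne, if_neg (by tauto), if_neg (by tauto)]
        simpa using E2_zero
  have h2 : F = ∑ v : V, if LiesOn s t l v then sigmaW s t j v - (k : ℚ) / 2 else 0 := by
    rw [hF, Finset.sum_add_distrib]
    rw [← Finset.sum_fiberwise Finset.univ s
      (fun f => if ¬ l f = 1 ∧ LiesOn s t l (s f) then j f else 0)]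
    rw [← Finset.sum_fiberwise Finset.univ t
      (fun f => if ¬ l f = 1 ∧ LiesOn s t l (t f) then j f else 0)]
    rw [← Finset.sum_add_distrib]
    apply Finset.sum_congr rfl
    intro v _
    by_cases hv : LiesOn s t l v
    · rw [if_pos hv]
      have hpos := liesOn_iff_cntZ_pos.1 hv
      have hs : ∀ f ∈ Finset.univ.filter (fun f => s f = v),
          (if ¬ l f = 1 ∧ LiesOn s t l (s f) then j f else 0)
            = (if ¬ l f = 1 then j f else 0) := by
        intro f hf
        have hsf : s f = v := (Finset.mem_filter.1 hf).2
        rw [hsf]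
        by_cases hc : l f = 1 <;> simp [hc, hv]
      have ht : ∀ f ∈ Finset.univ.filter (fun f => t f = v),
          (if ¬ l f = 1 ∧ LiesOn s t l (t f) then j f else 0)
            = (if ¬ l f = 1 then j f else 0) := by
        intro f hf
        have htf : t f = v := (Finset.mem_filter.1 hf).2
        rw [htf]
        by_cases hc : l f = 1 <;> simp [hc, hv]
      rw [Finset.sum_congr rfl hs, Finset.sum_congr rfl ht]
      rw [← nonlam_msum hut hl hfix hpos]
      exact (endsum_filter s t v (fun f => ¬ l f = 1) j).symm
    · rw [if_neg hv]
      have hs : ∀ f ∈ Finset.univ.filter (fun f => s f = v),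
          (if ¬ l f = 1 ∧ LiesOn s t l (s f) then j f else 0) = 0 := by
        intro f hf
        have hsf : s f = v := (Finset.mem_filter.1 hf).2
        rw [hsf]
        simp [hv]
      have ht : ∀ f ∈ Finset.univ.filter (fun f => t f = v),
          (if ¬ l f = 1 ∧ LiesOn s t l (t f) then j f else 0) = 0 := by
        intro f hf
        have htf : t f = v := (Finset.mem_filter.1 hf).2
        rw [htf]
        simp [hv]
      rw [Finset.sum_congr rfl hs, Finset.sum_congr rfl ht]
      simp
  rw [hGform, ← h2]
  exact h1

end Stmt10Aux
namespace Stmt10Aux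

variable {V E : Type*} [Fintype V] [Fintype E] [DecidableEq V] [DecidableEq E]

lemma podd {s t : E → V} {k : ℕ} {l1 l2 : E → ZMod 2} {j : E → ℚ}
    (hut : Unitrivalent s t) (hl1 : l1 ∈ cycleSpace s t) (hl2 : l2 ∈ cycleSpace s t)
    (hf1 : actW k l1 j = j) (hf2 : actW k l2 j = j)
    (hw : IsWeight k j)
    (hq : ∀ v, degree s t v = 3 → ∃ n : ℤ, sigmaW s t j v = (n : ℚ))
    {v : V} (hodd : ¬ 2 ∣ cnt2Z s t l1 l2 v) :
    (0 < cntZ s t l1 v ∧ 0 < cntZ s t l2 v ∧ 0 < cntZ s t (l1 + l2) v)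
      ∧ sigmaW s t j v - (k : ℚ) / 2 = (k : ℚ) / 4
      ∧ ∃ n : ℤ, (k : ℚ) / 4 = (n : ℚ) := by
  have hν0 := cnt2Z_nonneg s t l1 l2 v
  have hνpos : 0 < cnt2Z s t l1 l2 v := by omega
  have hp1 : 0 < cntZ s t l1 v := lt_of_lt_of_le hνpos (cnt2Z_le_left s t l1 l2 v)
  have hp2 : 0 < cntZ s t l2 v := lt_of_lt_of_le hνpos (cnt2Z_le_right s t l1 l2 v)
  obtain ⟨hdeg, hc1⟩ := stab_cnt hut hl1 hp1
  obtain ⟨-, hc2⟩ := stab_cnt hut hl2 hp2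
  have hνle := cnt2Z_le_left s t l1 l2 v
  have hν1 : cnt2Z s t l1 l2 v = 1 := by omega
  have hadd := cntZ_add s t l1 l2 v
  have hc3 : cntZ s t (l1 + l2) v = 2 := by omega
  have hp3 : 0 < cntZ s t (l1 + l2) v := by omega
  -- extract the unique non-l1 end g and show it is an l2-end
  obtain ⟨g, hg, hsig⟩ := nonlam_sum hut hl1 hf1 hp1
  have hsplit : cntZ s t l2 v
      = (((endsAt s t v).filter fun f => l1 f = 1).map
          fun f => if l2 f = 1 then (1 : ℤ) else 0).sum
        + (if l2 g = 1 then (1 : ℤ) else 0) := by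
    rw [cntZ]
    conv_lhs => rw [← Multiset.filter_add_not (fun f => l1 f = 1) (endsAt s t v)]
    rw [Multiset.map_add, Multiset.sum_add, hg]
    simp
  have hfirst : (((endsAt s t v).filter fun f => l1 f = 1).map
      fun f => if l2 f = 1 then (1 : ℤ) else 0).sum = cnt2Z s t l1 l2 v := by
    rw [cnt2Z]
    conv_rhs => rw [← Multiset.filter_add_not (fun f => l1 f = 1) (endsAt s t v)]
    rw [Multiset.map_add, Multiset.sum_add]
    have hz : ((Multiset.filter (fun f => ¬ l1 f = 1) (endsAt s t v)).map
        fun f => if l1 f = 1 ∧ l2 f = 1 then (1 : ℤ) else 0).sum = 0 := by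
      apply Multiset.sum_eq_zero
      intro x hx
      obtain ⟨f, hf, rfl⟩ := Multiset.mem_map.1 hx
      have := (Multiset.mem_filter.1 hf).2
      simp [this]
    have hcongr : ((Multiset.filter (fun f => l1 f = 1) (endsAt s t v)).map
        fun f => if l1 f = 1 ∧ l2 f = 1 then (1 : ℤ) else 0)
        = ((Multiset.filter (fun f => l1 f = 1) (endsAt s t v)).map
          fun f => if l2 f = 1 then (1 : ℤ) else 0) := by
      apply Multiset.map_congr rfl
      intro f hf
      have := (Multiset.mem_filter.1 hf).2
      simp [this]
    rw [hz, hcongr, add_zero]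
  have hl2g : l2 g = 1 := by
    by_cases h : l2 g = 1
    · exact h
    · rw [hfirst, hν1, if_neg h] at hsplit; omega
  have hjg : 2 * j g = (k : ℚ) / 2 := j_fix hf2 hl2g
  have hval : sigmaW s t j v - (k : ℚ) / 2 = (k : ℚ) / 4 := by
    rw [hsig]; linarith
  obtain ⟨n0, hn0⟩ := hq v hdeg
  obtain ⟨e, he1, -⟩ := exists_end_of_cntZ_pos hp1
  obtain ⟨m, hm⟩ := khalf hw hf1 he1
  refine ⟨⟨hp1, hp2, hp3⟩, hval, ⟨n0 - m, ?_⟩⟩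
  have hjg4 : j g = (k : ℚ) / 4 := by linarith
  rw [hsig, hm] at hn0
  push_cast
  linarith

lemma T3 {s t : E → V} {k : ℕ} {l1 l2 : E → ZMod 2} {j : E → ℚ}
    (hut : Unitrivalent s t) (hl1 : l1 ∈ cycleSpace s t) (hl2 : l2 ∈ cycleSpace s t)
    (hf1 : actW k l1 j = j) (hf2 : actW k l2 j = j)
    (hw : IsWeight k j)
    (hq : ∀ v, degree s t v = 3 → ∃ n : ℤ, sigmaW s t j v = (n : ℚ)) :
    E2 (Gfun s t k j (l1 + l2) - Gfun s t k j l1 - Gfun s t k j l2) := by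
  have hl3 : l1 + l2 ∈ cycleSpace s t := add_mem hl1 hl2
  have hf3 : actW k (l1 + l2) j = j := by rw [actW_add, hf2, hf1]
  set oddV : Finset V := Finset.univ.filter (fun v => ¬ (2 ∣ cnt2Z s t l1 l2 v)) with hoddV
  have key : ∀ v : V, E2 ((if 0 < cntZ s t (l1 + l2) v then sigmaW s t j v - (k : ℚ) / 2 else 0)
      - (if 0 < cntZ s t l1 v then sigmaW s t j v - (k : ℚ) / 2 else 0)
      - (if 0 < cntZ s t l2 v then sigmaW s t j v - (k : ℚ) / 2 else 0)
      + (if v ∈ oddV then sigmaW s t j v - (k : ℚ) / 2 else 0)) := by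
    intro v
    by_cases hodd : 2 ∣ cnt2Z s t l1 l2 v
    · have hmem : v ∉ oddV := by simp [hoddV, hodd]
      rw [if_neg hmem, add_zero]
      have hν0 := cnt2Z_nonneg s t l1 l2 v
      have hνl := cnt2Z_le_left s t l1 l2 v
      have hνr := cnt2Z_le_right s t l1 l2 v
      have he1 := cntZ_even hl1 v
      have he2 := cntZ_even hl2 v
      have he3 := cntZ_even hl3 v
      have hn1 := cntZ_nonneg s t l1 v
      have hn2 := cntZ_nonneg s t l2 v
      have hn3 := cntZ_nonneg s t (l1 + l2) v
      have hb1 := cntZ_le_degree s t l1 v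
      have hb2 := cntZ_le_degree s t l2 v
      have hb3 := cntZ_le_degree s t (l1 + l2) v
      have hadd := cntZ_add s t l1 l2 v
      rcases hut v with hdeg | hdeg <;> rw [hdeg] at hb1 hb2 hb3
      · have h1 : cntZ s t l1 v = 0 := by omega
        have h2 : cntZ s t l2 v = 0 := by omega
        have h3 : cntZ s t (l1 + l2) v = 0 := by omega
        rw [h1, h2, h3]
        refine ⟨0, ?_⟩
        norm_num
      · have h1 : cntZ s t l1 v = 0 ∨ cntZ s t l1 v = 2 := by omega
        have h2 : cntZ s t l2 v = 0 ∨ cntZ s t l2 v = 2 := by omega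
        rcases h1 with h1 | h1 <;> rcases h2 with h2 | h2
        · have h3 : cntZ s t (l1 + l2) v = 0 := by omega
          rw [h1, h2, h3]
          refine ⟨0, ?_⟩
          norm_num
        · have h3 : cntZ s t (l1 + l2) v = 2 := by omega
          rw [h1, h2, h3]
          refine ⟨0, ?_⟩
          norm_num
        · have h3 : cntZ s t (l1 + l2) v = 2 := by omega
          rw [h1, h2, h3]
          refine ⟨0, ?_⟩
          norm_num
        · have h3 : cntZ s t (l1 + l2) v = 0 := by omega
          rw [h1, h2, h3]
          obtain ⟨n0, hn0⟩ := hq v hdeg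
          obtain ⟨e, he, -⟩ := exists_end_of_cntZ_pos (show 0 < cntZ s t l1 v by omega)
          obtain ⟨m, hm⟩ := khalf hw hf1 he
          refine ⟨m - n0, ?_⟩
          norm_num
          push_cast
          linarith
    · obtain ⟨⟨hp1, hp2, hp3⟩, -, -⟩ := podd hut hl1 hl2 hf1 hf2 hw hq hodd
      have hmem : v ∈ oddV := by
        rw [hoddV]; exact Finset.mem_filter.2 ⟨Finset.mem_univ v, hodd⟩
      rw [if_pos hmem, if_pos hp1, if_pos hp2, if_pos hp3]
      refine ⟨0, ?_⟩
      ring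
  have hsplit : Gfun s t k j (l1 + l2) - Gfun s t k j l1 - Gfun s t k j l2
      + (∑ v : V, if v ∈ oddV then sigmaW s t j v - (k : ℚ) / 2 else 0)
      = ∑ v : V, ((if 0 < cntZ s t (l1 + l2) v then sigmaW s t j v - (k : ℚ) / 2 else 0)
        - (if 0 < cntZ s t l1 v then sigmaW s t j v - (k : ℚ) / 2 else 0)
        - (if 0 < cntZ s t l2 v then sigmaW s t j v - (k : ℚ) / 2 else 0)
        + (if v ∈ oddV then sigmaW s t j v - (k : ℚ) / 2 else 0)) := by
    rw [Gfun, Gfun, Gfun, ← Finset.sum_sub_distrib, ← Finset.sum_sub_distrib,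
      ← Finset.sum_add_distrib]
  have hodds : E2 (∑ v : V, if v ∈ oddV then sigmaW s t j v - (k : ℚ) / 2 else 0) := by
    rw [Finset.sum_ite_mem, Finset.univ_inter]
    rcases Finset.eq_empty_or_nonempty oddV with hE | ⟨v0, hv0⟩
    · rw [hE]
      refine ⟨0, ?_⟩
      norm_num
    · have hodd0 : ¬ 2 ∣ cnt2Z s t l1 l2 v0 := by
        have := Finset.mem_filter.1 (hoddV ▸ hv0)
        exact this.2
      obtain ⟨-, -, n, hn⟩ := podd hut hl1 hl2 hf1 hf2 hw hq hodd0
      have hconst : ∀ v ∈ oddV, sigmaW s t j v - (k : ℚ) / 2 = (k : ℚ) / 4 := by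
        intro v hv
        have hoddv : ¬ 2 ∣ cnt2Z s t l1 l2 v := by
          rw [hoddV] at hv
          exact (Finset.mem_filter.1 hv).2
        exact (podd hut hl1 hl2 hf1 hf2 hw hq hoddv).2.1
      rw [Finset.sum_congr rfl hconst, Finset.sum_const]
      have hcard : 2 ∣ (oddV.card : ℤ) := by
        have hh := handshake s t l1 l2
        have h2 : 2 ∣ ∑ v : V, (cnt2Z s t l1 l2 v - if v ∈ oddV then (1 : ℤ) else 0) := by
          apply Finset.dvd_sum
          intro v _
          by_cases hm : v ∈ oddV
          · have hmm := hm
            rw [hoddV] at hmm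
            have : ¬ 2 ∣ cnt2Z s t l1 l2 v := (Finset.mem_filter.1 hmm).2
            rw [if_pos hm]
            omega
          · have : ¬ ¬ 2 ∣ cnt2Z s t l1 l2 v := by
              intro hcon
              exact hm (by rw [hoddV]; exact Finset.mem_filter.2 ⟨Finset.mem_univ v, hcon⟩)
            rw [if_neg hm]
            omega
        have h3 : ∑ v : V, (if v ∈ oddV then (1 : ℤ) else 0) = (oddV.card : ℤ) := by
          rw [Finset.sum_ite_mem, Finset.univ_inter, Finset.sum_const]
          simp
        rw [Finset.sum_sub_distrib, h3] at h2
        omega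
      obtain ⟨c, hc⟩ : ∃ c : ℕ, oddV.card = 2 * c := by
        obtain ⟨z, hz⟩ := hcard
        have hz0 : 0 ≤ z := by omega
        exact ⟨z.toNat, by omega⟩
      refine ⟨c * n, ?_⟩
      rw [hc, hn]
      push_cast
      ring
  have hfinal : Gfun s t k j (l1 + l2) - Gfun s t k j l1 - Gfun s t k j l2
      = (∑ v : V, ((if 0 < cntZ s t (l1 + l2) v then sigmaW s t j v - (k : ℚ) / 2 else 0)
        - (if 0 < cntZ s t l1 v then sigmaW s t j v - (k : ℚ) / 2 else 0)
        - (if 0 < cntZ s t l2 v then sigmaW s t j v - (k : ℚ) / 2 else 0)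
        + (if v ∈ oddV then sigmaW s t j v - (k : ℚ) / 2 else 0)))
        - (∑ v : V, if v ∈ oddV then sigmaW s t j v - (k : ℚ) / 2 else 0) := by
    linarith [hsplit]
  rw [hfinal]
  exact E2_sub (E2_sum fun v _ => key v) hodds

end Stmt10Aux
namespace Stmt10Aux

variable {V E : Type*} [Fintype V] [Fintype E] [DecidableEq V] [DecidableEq E]

lemma parity {s t : E → V} {k : ℕ} {j : E → ℚ}
    (hut : Unitrivalent s t) (hw : IsWeight k j)
    (hq : ∀ v, degree s t v = 3 → ∃ n : ℤ, sigmaW s t j v = (n : ℚ))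
    {l1 l2 : E → ZMod 2} (h1 : l1 ∈ stab s t k j) (h2 : l2 ∈ stab s t k j) :
    ∃ n : ℤ, Sfun s t j (l1 + l2) = Sfun s t j l1 + Sfun s t j l2 + 2 * (n : ℚ) := by
  obtain ⟨hc1, hfx1⟩ := h1
  obtain ⟨hc2, hfx2⟩ := h2
  have hc3 : l1 + l2 ∈ cycleSpace s t := add_mem hc1 hc2
  have hfx3 : actW k (l1 + l2) j = j := by rw [actW_add, hfx2, hfx1]
  obtain ⟨a1, ha1⟩ := SG hut hc1 hfx1 hw hq
  obtain ⟨a2, ha2⟩ := SG hut hc2 hfx2 hw hq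
  obtain ⟨a3, ha3⟩ := SG hut hc3 hfx3 hw hq
  obtain ⟨a4, ha4⟩ := T3 hut hc1 hc2 hfx1 hfx2 hw hq
  refine ⟨a3 - a1 - a2 + a4, ?_⟩
  push_cast
  linarith

end Stmt10Aux

open Stmt10Aux

/-- for `j ∈ QCG_k(Γ; j')`, the map sending `lam` to
`exp(π√-1 · Σ_{f ∈ Ex(lam)} j f)` is a group homomorphism from the stabilizer
`Stab(j) = {lam ∈ Z(Γ) | lam · j = j}` to `ℂˣ`. -/
theorem external_sum_exp_is_hom
    (s t : E → V) (k : ℕ) (j' : E → ℚ)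
    (hut : Unitrivalent s t) (hk : 0 < k)
    (j : E → ℚ) (hj : j ∈ QCG s t k j') :
    ∃ φ : Multiplicative ↥(stab s t k j) →* ℂˣ,
      ∀ lam : ↥(stab s t k j),
        ((φ (Multiplicative.ofAdd lam) : ℂˣ) : ℂ) =
          Complex.exp (Real.pi * Complex.I *
            ((∑ f ∈ Ex s t ((lam : E → ZMod 2)), j f : ℚ) : ℂ)) := by
  have hw : IsWeight k j := hj.1
  have hq : ∀ v, degree s t v = 3 → ∃ n : ℤ, sigmaW s t j v = (n : ℚ) :=
    fun v hv => (hj.2.2 v hv).1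
  refine ⟨MonoidHom.mk' (fun a => Units.mk0
      (Complex.exp (Real.pi * Complex.I *
        ((Sfun s t j ((Multiplicative.toAdd a : ↥(stab s t k j)) : E → ZMod 2) : ℚ) : ℂ)))
      (Complex.exp_ne_zero _)) ?_, ?_⟩
  · intro a b
    apply Units.ext
    show Complex.exp _ = Complex.exp _ * Complex.exp _
    obtain ⟨n, hn⟩ := parity hut hw hq
      (Multiplicative.toAdd a : ↥(stab s t k j)).2
      (Multiplicative.toAdd b : ↥(stab s t k j)).2
    have hco : ((Multiplicative.toAdd (a * b) : ↥(stab s t k j)) : E → ZMod 2)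
        = ((Multiplicative.toAdd a : ↥(stab s t k j)) : E → ZMod 2)
          + ((Multiplicative.toAdd b : ↥(stab s t k j)) : E → ZMod 2) := rfl
    rw [hco]
    have harg : (Real.pi : ℂ) * Complex.I *
        ((Sfun s t j (((Multiplicative.toAdd a : ↥(stab s t k j)) : E → ZMod 2)
          + ((Multiplicative.toAdd b : ↥(stab s t k j)) : E → ZMod 2)) : ℚ) : ℂ)
        = (Real.pi : ℂ) * Complex.I *
            ((Sfun s t j ((Multiplicative.toAdd a : ↥(stab s t k j)) : E → ZMod 2) : ℚ) : ℂ)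
          + ((Real.pi : ℂ) * Complex.I *
            ((Sfun s t j ((Multiplicative.toAdd b : ↥(stab s t k j)) : E → ZMod 2) : ℚ) : ℂ)
            + (n : ℂ) * (2 * (Real.pi : ℂ) * Complex.I)) := by
      rw [hn]
      push_cast
      ring
    rw [harg, Complex.exp_add, Complex.exp_add, Complex.exp_int_mul_two_pi_mul_I, mul_one]
  · intro lam
    rfl
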